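/- Let M(z) = ∫ t^z μ(dt) where μ is an absolutely continuous probability measure with C¹ density supported in [c₋,c₊] ⊂ (0,∞), satisfying E[Z] > 1 and E[log Z] < 0, and let α ∈ (0,1) be the unique positive real root of M(z)=1. Then there exists δ > 0 such that the only complex solution z of M(z) = 1 with Re z ∈ [α, α+δ] is z = α. -/

import Mathlib

open MeasureTheory Set Filter Real

lemma aux_contOn {cm cp : ℝ} (hcm : 0 < cm) {μ : ℝ → ℝ} (hμ : Continuous μ) (u : ℂ) :
    ContinuousOn (fun t : ℝ => (t:ℂ) ^ u * (μ t : ℂ)) (Set.Icc cm cp) := by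
  apply ContinuousOn.mul _ (Continuous.continuousOn (by continuity))
  intro t ht
  have h0 : (0:ℝ) < t := lt_of_lt_of_le hcm ht.1
  exact ((continuousAt_cpow_const (by simp [Complex.slitPlane, h0])).comp
    Complex.continuous_ofReal.continuousAt).continuousWithinAt

lemma aux_integrable {cm cp : ℝ} (hcm : 0 < cm) {μ : ℝ → ℝ} (hμ : Continuous μ) (u : ℂ) :
    IntegrableOn (fun t : ℝ => (t:ℂ) ^ u * (μ t : ℂ)) (Set.Icc cm cp) :=
  (aux_contOn hcm hμ u).integrableOn_compact isCompact_Icc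

lemma aux_re_pt {t : ℝ} (ht : 0 < t) (u : ℂ) (m : ℝ) :
    ((t:ℂ) ^ u * (m : ℂ)).re = t ^ u.re * (Real.cos (u.im * Real.log t) * m) := by
  rw [Complex.cpow_def_of_ne_zero (by exact_mod_cast ht.ne')]
  rw [← Complex.ofReal_log ht.le]
  simp [Complex.exp_re, Complex.mul_re, Complex.mul_im, Real.rpow_def_of_pos ht]
  ring

lemma aux_eq_mellin {cm cp : ℝ} (hcm : 0 < cm) {μ : ℝ → ℝ}
    (hsupp : Function.support μ ⊆ Set.Icc cm cp) (z : ℂ) :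
    (∫ t in Icc cm cp, (t:ℂ) ^ z * (μ t : ℂ)) = mellin (fun t => (μ t : ℂ)) (z + 1) := by
  rw [mellin]
  simp_rw [add_sub_cancel_right, smul_eq_mul]
  refine (setIntegral_eq_of_subset_of_forall_diff_eq_zero measurableSet_Ioi
    (fun t ht => lt_of_lt_of_le hcm ht.1) (fun t ht => ?_)).symm
  have : μ t = 0 := by
    by_contra h
    exact ht.2 (hsupp h)
  simp [this]

lemma aux_entire {cm cp : ℝ} (hcm : 0 < cm) (hcmcp : cm < cp) {μ : ℝ → ℝ} (hμ : Continuous μ)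
    (hsupp : Function.support μ ⊆ Set.Icc cm cp) :
    Differentiable ℂ (fun z : ℂ => ∫ t in Icc cm cp, (t:ℂ) ^ z * (μ t : ℂ)) := by
  have hloc : LocallyIntegrableOn (fun t => (μ t : ℂ)) (Ioi (0:ℝ)) :=
    (Continuous.locallyIntegrable (by continuity)).locallyIntegrableOn _
  have hzero_top : ∀ᶠ t in atTop, (fun t => (μ t : ℂ)) t = 0 := by
    filter_upwards [eventually_gt_atTop cp] with t ht
    have : μ t = 0 := by
      by_contra h
      exact absurd (hsupp h).2 (not_le.2 ht)
    simp [this]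
  have hzero_bot : ∀ᶠ t in nhdsWithin (0:ℝ) (Ioi 0), (fun t => (μ t : ℂ)) t = 0 := by
    filter_upwards [Ioo_mem_nhdsGT_of_mem (by exact ⟨le_refl 0, hcm⟩ : (0:ℝ) ∈ Ico 0 cm)]
      with t ht
    have : μ t = 0 := by
      by_contra h
      exact absurd (hsupp h).1 (not_le.2 ht.2)
    simp [this]
  intro z
  have hd : DifferentiableAt ℂ (mellin (fun t => (μ t : ℂ))) (z + 1) := by
    refine mellin_differentiableAt_of_isBigO_rpow (a := (z+1).re + 1) (b := (z+1).re - 1)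
      hloc ?_ (by linarith) ?_ (by linarith)
    · refine Asymptotics.IsBigO.of_bound 0 ?_
      filter_upwards [hzero_top] with t ht
      simp [ht]
    · refine Asymptotics.IsBigO.of_bound 0 ?_
      filter_upwards [hzero_bot] with t ht
      simp [ht]
  have : DifferentiableAt ℂ (fun w : ℂ => mellin (fun t => (μ t : ℂ)) (w + 1)) z :=
    hd.comp (f := fun w : ℂ => w + 1) z ((differentiableAt_id).add_const 1)
  exact this.congr_of_eventuallyEq
    (Filter.Eventually.of_forall (fun w => aux_eq_mellin hcm hsupp w))

lemma aux_re_integral {cm cp : ℝ} (hcm : 0 < cm) {μ : ℝ → ℝ} (hμ : Continuous μ) (u : ℂ) :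
    (∫ t in Icc cm cp, (t:ℂ) ^ u * (μ t : ℂ)).re
      = ∫ t in Icc cm cp, t ^ u.re * (Real.cos (u.im * Real.log t) * μ t) := by
  have h : ∫ t in Icc cm cp, ((t:ℂ) ^ u * (μ t : ℂ)).re
      = (∫ t in Icc cm cp, (t:ℂ) ^ u * (μ t : ℂ)).re :=
    integral_re (aux_integrable hcm hμ u)
  rw [← h]
  refine setIntegral_congr_fun measurableSet_Icc (fun t ht => ?_)
  exact aux_re_pt (lt_of_lt_of_le hcm ht.1) u (μ t)

lemma aux_real_val {cm cp : ℝ} (hcm : 0 < cm) {μ : ℝ → ℝ} (x : ℝ) :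
    (∫ t in Icc cm cp, (t:ℂ) ^ (x:ℂ) * (μ t : ℂ))
      = ((∫ t in Icc cm cp, t ^ x * μ t : ℝ) : ℂ) := by
  have h : ∫ t in Icc cm cp, ((t ^ x * μ t : ℝ) : ℂ)
      = ((∫ t in Icc cm cp, t ^ x * μ t : ℝ) : ℂ) := integral_ofReal
  rw [← h]
  refine setIntegral_congr_fun measurableSet_Icc (fun t ht => ?_)
  have ht0 : (0:ℝ) < t := lt_of_lt_of_le hcm ht.1
  rw [← Complex.ofReal_cpow ht0.le]
  push_cast
  ring

lemma aux_F_pos {cm cp : ℝ} (hcm : 0 < cm) (hcmcp : cm < cp) {μ : ℝ → ℝ} (hμ : Continuous μ)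
    (hnn : ∀ t, 0 ≤ μ t) (hprob : ∫ t in Icc cm cp, μ t = 1) {y : ℝ} (hy : y ≠ 0) :
    0 < ∫ t in Icc cm cp, (1 - Real.cos (y * Real.log t)) * μ t := by
  have hex : ∃ t₀ ∈ Icc cm cp, 0 < μ t₀ := by
    by_contra h
    push_neg at h
    have h0 : ∫ t in Icc cm cp, μ t = 0 := by
      rw [setIntegral_congr_fun measurableSet_Icc (g := fun _ => (0:ℝ))
        (fun t ht => le_antisymm (h t ht) (hnn t))]
      simp
    rw [h0] at hprob; norm_num at hprob
  obtain ⟨t₀, ht₀I, ht₀⟩ := hex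
  obtain ⟨η, hη, hball⟩ := Metric.continuousAt_iff.1 hμ.continuousAt (μ t₀ / 2) (by linarith)
  set p := max cm (t₀ - η/2) with hpdef
  set q := min cp (t₀ + η/2) with hqdef
  have hIcc := ht₀I
  have hpq : p < q := by
    rw [hpdef, hqdef, lt_min_iff, max_lt_iff, max_lt_iff]
    exact ⟨⟨hcmcp, by linarith [hIcc.2]⟩, ⟨by linarith [hIcc.1], by linarith⟩⟩
  have hp0 : 0 < p := lt_of_lt_of_le hcm (le_max_left _ _)
  have hμlow : ∀ s ∈ Icc p q, μ t₀ / 2 < μ s := by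
    intro s hs
    have h1 : t₀ - η/2 ≤ s := le_trans (le_max_right _ _) hs.1
    have h2 : s ≤ t₀ + η/2 := le_trans hs.2 (min_le_right _ _)
    have : dist s t₀ < η := by
      rw [Real.dist_eq, abs_lt]; constructor <;> linarith
    have := hball this
    rw [Real.dist_eq, abs_lt] at this
    linarith [this.1, this.2]
  have hsubIcc : Icc p q ⊆ Icc cm cp := Icc_subset_Icc (le_max_left _ _) (min_le_left _ _)
  -- pick a point with cos < 1
  set q' := min q (p * Real.exp (π / |y|)) with hq'def
  have hexp1 : 1 < Real.exp (π / |y|) := by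
    have : 0 < π / |y| := div_pos Real.pi_pos (abs_pos.2 hy)
    nlinarith [Real.add_one_le_exp (π / |y|)]
  have hpq' : p < q' := lt_min hpq (by nlinarith)
  have hq'q : q' ≤ q := min_le_left _ _
  have hq'0 : 0 < q' := lt_trans hp0 hpq'
  have hlogd : Real.log q' - Real.log p ≤ π / |y| := by
    have h1 : Real.log q' ≤ Real.log (p * Real.exp (π / |y|)) :=
      Real.log_le_log hq'0 (min_le_right _ _)
    rw [Real.log_mul (ne_of_gt hp0) (Real.exp_ne_zero _), Real.log_exp] at h1
    linarith
  have hlogp : 0 < Real.log q' - Real.log p := sub_pos.2 (Real.log_lt_log hp0 hpq')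
  have hcoslt : Real.cos (y * Real.log p) < 1 ∨ Real.cos (y * Real.log q') < 1 := by
    by_contra h
    push_neg at h
    have h1 : Real.cos (y * Real.log p) = 1 :=
      le_antisymm (Real.cos_le_one _) h.1
    have h2 : Real.cos (y * Real.log q') = 1 :=
      le_antisymm (Real.cos_le_one _) h.2
    obtain ⟨n1, hn1⟩ := (Real.cos_eq_one_iff _).1 h1
    obtain ⟨n2, hn2⟩ := (Real.cos_eq_one_iff _).1 h2
    have hdiff : ((n2 - n1 : ℤ) : ℝ) * (2 * π) = y * (Real.log q' - Real.log p) := by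
      push_cast
      nlinarith [hn1, hn2]
    have habs : |y * (Real.log q' - Real.log p)| ≤ π := by
      rw [abs_mul]
      have h3 : |Real.log q' - Real.log p| = Real.log q' - Real.log p := abs_of_pos hlogp
      rw [h3]
      calc |y| * (Real.log q' - Real.log p) ≤ |y| * (π / |y|) :=
            mul_le_mul_of_nonneg_left hlogd (abs_nonneg y)
        _ = π := by field_simp
    have hne : n2 ≠ n1 := by
      intro hEq
      rw [hEq, sub_self] at hdiff
      push_cast at hdiff
      have : y * (Real.log q' - Real.log p) = 0 := by linarith
      rcases mul_eq_zero.1 this with h' | h'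
      · exact hy h'
      · linarith
    have h1le : (1:ℝ) ≤ |((n2 - n1 : ℤ) : ℝ)| := by
      rw [← Int.cast_abs]
      exact_mod_cast Int.one_le_abs (sub_ne_zero.2 hne)
    have : 2 * π ≤ |y * (Real.log q' - Real.log p)| := by
      rw [← hdiff, abs_mul, abs_of_pos (by positivity : (0:ℝ) < 2 * π)]
      nlinarith [Real.pi_pos]
    nlinarith [Real.pi_pos]
  obtain ⟨s, hsmem, hcos⟩ : ∃ s ∈ Icc p q, Real.cos (y * Real.log s) < 1 := by
    rcases hcoslt with h | h
    · exact ⟨p, ⟨le_refl p, hpq.le⟩, h⟩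
    · exact ⟨q', ⟨hpq'.le, hq'q⟩, h⟩
  set g : ℝ → ℝ := fun t => (1 - Real.cos (y * Real.log t)) * μ t with hgdef
  have hgs : 0 < g s := mul_pos (by linarith) (lt_trans (half_pos ht₀) (hμlow s hsmem))
  have hs0 : 0 < s := lt_of_lt_of_le hp0 hsmem.1
  have hgc : ContinuousAt g s := by
    apply ContinuousAt.mul _ hμ.continuousAt
    exact continuousAt_const.sub (Real.continuous_cos.continuousAt.comp
      (continuousAt_const.mul (Real.continuousAt_log hs0.ne')))
  obtain ⟨η₂, hη₂, hball₂⟩ := Metric.continuousAt_iff.1 hgc (g s / 2) (by linarith)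
  set p' := max cm (s - η₂/2) with hp'def
  set q'' := min cp (s + η₂/2) with hq''def
  have hsIcc : s ∈ Icc cm cp := hsubIcc hsmem
  have hp'q'' : p' < q'' := by
    rw [hp'def, hq''def, lt_min_iff, max_lt_iff, max_lt_iff]
    exact ⟨⟨hcmcp, by linarith [hsIcc.2]⟩, ⟨by linarith [hsIcc.1], by linarith⟩⟩
  have hsub2 : Ioo p' q'' ⊆ Function.support g ∩ Icc cm cp := by
    intro z hz
    have hz1 : cm < z := lt_of_le_of_lt (le_max_left _ _) hz.1
    have hz2 : z < cp := lt_of_lt_of_le hz.2 (min_le_left _ _)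
    have hz3 : s - η₂/2 < z := lt_of_le_of_lt (le_max_right _ _) hz.1
    have hz4 : z < s + η₂/2 := lt_of_lt_of_le hz.2 (min_le_right _ _)
    have hdz : dist z s < η₂ := by
      rw [Real.dist_eq, abs_lt]; constructor <;> linarith
    have := hball₂ hdz
    rw [Real.dist_eq, abs_lt] at this
    refine ⟨?_, ⟨hz1.le, hz2.le⟩⟩
    intro h0
    rw [h0] at this
    simp at this
    linarith [this.1, this.2]
  have hnnae : 0 ≤ᵐ[volume.restrict (Icc cm cp)] g :=
    Eventually.of_forall (fun t => mul_nonneg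
      (by nlinarith [Real.cos_le_one (y * Real.log t)]) (hnn t))
  have hint : IntegrableOn g (Icc cm cp) := by
    apply ContinuousOn.integrableOn_compact isCompact_Icc
    apply ContinuousOn.mul _ hμ.continuousOn
    intro t ht
    exact (continuousAt_const.sub (Real.continuous_cos.continuousAt.comp
      (continuousAt_const.mul
        (Real.continuousAt_log (ne_of_gt (lt_of_lt_of_le hcm ht.1)))))).continuousWithinAt
  rw [setIntegral_pos_iff_support_of_nonneg_ae hnnae hint]
  calc (0:ENNReal) < volume (Ioo p' q'') := by
        rw [Real.volume_Ioo]; exact ENNReal.ofReal_pos.2 (by linarith)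
    _ ≤ volume (Function.support g ∩ Icc cm cp) := measure_mono hsub2

lemma aux_F_cont {cm cp : ℝ} {μ : ℝ → ℝ} (hμ : Continuous μ) (hnn : ∀ t, 0 ≤ μ t) :
    Continuous (fun y : ℝ => ∫ t in Icc cm cp, (1 - Real.cos (y * Real.log t)) * μ t) := by
  apply continuous_of_dominated (bound := fun t => 2 * μ t)
  · intro y
    exact ((measurable_const.sub (Real.measurable_cos.comp
      (measurable_const.mul Real.measurable_log))).mul hμ.measurable).aestronglyMeasurable
  · intro y
    refine Eventually.of_forall (fun t => ?_)
    rw [Real.norm_eq_abs, abs_mul, abs_of_nonneg (hnn t)]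
    have h1 := Real.cos_le_one (y * Real.log t)
    have h2 := Real.neg_one_le_cos (y * Real.log t)
    have : |1 - Real.cos (y * Real.log t)| ≤ 2 := by
      rw [abs_le]; constructor <;> linarith
    nlinarith [hnn t]
  · exact (continuous_const.mul hμ).integrableOn_Icc
  · exact Eventually.of_forall (fun t => by fun_prop)

lemma aux_image {cm cp : ℝ} (hcm : 0 < cm) (hcmcp : cm < cp) :
    Real.exp '' Icc (Real.log cm) (Real.log cp) = Icc cm cp := by
  ext z
  constructor
  · rintro ⟨v, hv, rfl⟩
    constructor
    · calc cm = Real.exp (Real.log cm) := (Real.exp_log hcm).symm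
        _ ≤ Real.exp v := Real.exp_le_exp.2 hv.1
    · calc Real.exp v ≤ Real.exp (Real.log cp) := Real.exp_le_exp.2 hv.2
        _ = cp := Real.exp_log (lt_trans hcm hcmcp)
  · intro hz
    have hz0 : 0 < z := lt_of_lt_of_le hcm hz.1
    refine ⟨Real.log z, ⟨Real.log_le_log hcm hz.1, Real.log_le_log hz0 hz.2⟩, Real.exp_log hz0⟩

lemma aux_cov {cm cp : ℝ} (hcm : 0 < cm) (hcmcp : cm < cp) {μ : ℝ → ℝ}
    (hsupp : Function.support μ ⊆ Set.Icc cm cp) (y : ℝ) :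
    ∫ t in Icc cm cp, Real.cos (y * Real.log t) * μ t
      = ∫ v : ℝ, Real.cos (y * v) * (Real.exp v * μ (Real.exp v)) := by
  rw [← aux_image hcm hcmcp]
  rw [integral_image_eq_integral_abs_deriv_smul measurableSet_Icc
    (fun x _ => (Real.hasDerivAt_exp x).hasDerivWithinAt) Real.exp_injective.injOn]
  rw [← setIntegral_eq_integral_of_forall_compl_eq_zero
    (s := Icc (Real.log cm) (Real.log cp))
    (f := fun v => Real.cos (y * v) * (Real.exp v * μ (Real.exp v)))]
  · refine setIntegral_congr_fun measurableSet_Icc (fun v _ => ?_)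
    rw [smul_eq_mul, abs_of_pos (Real.exp_pos v), Real.log_exp]
    ring
  · intro v hv
    have : μ (Real.exp v) = 0 := by
      by_contra h
      have hmem := hsupp h
      have h1 : Real.log cm ≤ v := by
        have := Real.log_le_log hcm hmem.1
        rwa [Real.log_exp] at this
      have h2 : v ≤ Real.log cp := by
        have := Real.log_le_log (Real.exp_pos v) hmem.2
        rwa [Real.log_exp] at this
      exact hv ⟨h1, h2⟩
    simp [this]

lemma aux_tail {cm cp : ℝ} (hcm : 0 < cm) (hcmcp : cm < cp) {μ : ℝ → ℝ} (hμ : Continuous μ)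
    (hsupp : Function.support μ ⊆ Set.Icc cm cp) :
    ∃ R, 0 < R ∧ ∀ y : ℝ, R ≤ |y| →
      ∫ t in Icc cm cp, Real.cos (y * Real.log t) * μ t ≤ 1/2 := by
  set f : ℝ → ℂ := fun v => ((Real.exp v * μ (Real.exp v) : ℝ) : ℂ) with hfdef
  have hfc : Continuous f := by
    apply Complex.continuous_ofReal.comp
    exact Real.continuous_exp.mul (hμ.comp Real.continuous_exp)
  have hμe : ∀ v : ℝ, v ∉ Icc (Real.log cm) (Real.log cp) → μ (Real.exp v) = 0 := by
    intro v hv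
    by_contra h
    have hmem := hsupp h
    have h1 : Real.log cm ≤ v := by
      have := Real.log_le_log hcm hmem.1
      rwa [Real.log_exp] at this
    have h2 : v ≤ Real.log cp := by
      have := Real.log_le_log (Real.exp_pos v) hmem.2
      rwa [Real.log_exp] at this
    exact hv ⟨h1, h2⟩
  have hfs : HasCompactSupport f := by
    apply HasCompactSupport.intro (isCompact_Icc (a := Real.log cm) (b := Real.log cp))
    intro v hv
    simp [hfdef, hμe v hv]
  have hfi : Integrable f := hfc.integrable_of_hasCompactSupport hfs
  have hRL := Real.tendsto_integral_exp_smul_cocompact f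
  have hev : ∀ᶠ w in cocompact ℝ,
      ‖∫ v : ℝ, Real.fourierChar (-(v * w)) • f v‖ < 1/2 := by
    have := hRL.eventually (Metric.ball_mem_nhds (0:ℂ) (by norm_num : (0:ℝ) < 1/2))
    filter_upwards [this] with w hw
    simpa [dist_eq_norm] using hw
  rw [Filter.eventually_iff, Filter.mem_cocompact] at hev
  obtain ⟨K, hK, hKs⟩ := hev
  obtain ⟨R₀, hR₀⟩ := hK.isBounded.subset_closedBall 0
  refine ⟨2 * π * (|R₀| + 1), by positivity, fun y hy => ?_⟩
  set w : ℝ := -(y / (2 * π)) with hwdef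
  have hwK : w ∉ K := by
    intro hmem
    have h1 := hR₀ hmem
    rw [Metric.mem_closedBall, Real.dist_eq, sub_zero] at h1
    have h2 : |w| = |y| / (2 * π) := by
      rw [hwdef, abs_neg, abs_div]
      congr 1
      rw [abs_of_pos (by positivity)]
    have hπ := Real.pi_pos
    have : 2 * π * (|R₀| + 1) ≤ |y| := hy
    have h3 : |R₀| + 1 ≤ |y| / (2 * π) := by
      rw [le_div_iff₀ (by positivity)]
      linarith [this]
    have h4 := le_abs_self R₀
    rw [h2] at h1
    linarith
  have hsmall : ‖∫ v : ℝ, Real.fourierChar (-(v * w)) • f v‖ < 1/2 := hKs hwK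
  -- identify real part
  have hintg : Integrable (fun v : ℝ => Real.fourierChar (-(v * w)) • f v) := by
    apply Continuous.integrable_of_hasCompactSupport
    · exact (Real.continuous_fourierChar.comp
        ((continuous_id.mul continuous_const).neg)).smul hfc
    · apply HasCompactSupport.intro (isCompact_Icc (a := Real.log cm) (b := Real.log cp))
      intro v hv
      simp [hfdef, hμe v hv]
  have hre : (∫ v : ℝ, Real.fourierChar (-(v * w)) • f v).re
      = ∫ v : ℝ, Real.cos (y * v) * (Real.exp v * μ (Real.exp v)) := by
    have h : (∫ v : ℝ, (Real.fourierChar (-(v * w)) • f v).re)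
        = (∫ v : ℝ, Real.fourierChar (-(v * w)) • f v).re := integral_re hintg
    rw [← h]
    congr 1
    ext v
    rw [Circle.smul_def, Real.fourierChar_apply]
    have harg : 2 * π * (-(v * w)) = y * v := by
      rw [hwdef]
      have hπ := Real.pi_ne_zero
      field_simp
    rw [harg]
    simp only [smul_eq_mul, Complex.mul_re, hfdef, Complex.ofReal_re, Complex.ofReal_im,
      ← Complex.ofReal_mul, Complex.exp_ofReal_mul_I_re, mul_zero, sub_zero]
  rw [aux_cov hcm hcmcp hsupp y, ← hre]
  calc (∫ v : ℝ, Real.fourierChar (-(v * w)) • f v).re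
      ≤ |(∫ v : ℝ, Real.fourierChar (-(v * w)) • f v).re| := le_abs_self _
    _ ≤ ‖∫ v : ℝ, Real.fourierChar (-(v * w)) • f v‖ := Complex.abs_re_le_norm _
    _ ≤ 1/2 := hsmall.le

section
variable {cm cp : ℝ} {μ : ℝ → ℝ}

lemma aux_int_cos (hcm : 0 < cm) (hμ : Continuous μ) (y : ℝ) :
    IntegrableOn (fun t => Real.cos (y * Real.log t) * μ t) (Icc cm cp) := by
  apply ContinuousOn.integrableOn_compact isCompact_Icc
  apply ContinuousOn.mul _ hμ.continuousOn
  intro t ht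
  exact (Real.continuous_cos.continuousAt.comp (continuousAt_const.mul
    (Real.continuousAt_log (ne_of_gt (lt_of_lt_of_le hcm ht.1))))).continuousWithinAt

lemma aux_split (hcm : 0 < cm) (hμ : Continuous μ)
    (hprob : ∫ t in Icc cm cp, μ t = 1) (y : ℝ) :
    ∫ t in Icc cm cp, (1 - Real.cos (y * Real.log t)) * μ t
      = 1 - ∫ t in Icc cm cp, Real.cos (y * Real.log t) * μ t := by
  have h1 : ∫ t in Icc cm cp, (1 - Real.cos (y * Real.log t)) * μ t
      = ∫ t in Icc cm cp, (μ t - Real.cos (y * Real.log t) * μ t) :=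
    setIntegral_congr_fun measurableSet_Icc (fun t _ => by ring)
  rw [h1, integral_sub hμ.integrableOn_Icc (aux_int_cos hcm hμ y), hprob]

lemma aux_unif (hcm : 0 < cm) (hcmcp : cm < cp) (hμ : Continuous μ)
    (hnn : ∀ t, 0 ≤ μ t) (hprob : ∫ t in Icc cm cp, μ t = 1)
    (hsupp : Function.support μ ⊆ Set.Icc cm cp) {b : ℝ} (hb : 0 < b) :
    ∃ ε > 0, ∀ y : ℝ, b ≤ |y| →
      ε ≤ ∫ t in Icc cm cp, (1 - Real.cos (y * Real.log t)) * μ t := by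
  obtain ⟨R, hR, hRle⟩ := aux_tail hcm hcmcp hμ hsupp
  set F : ℝ → ℝ := fun y => ∫ t in Icc cm cp, (1 - Real.cos (y * Real.log t)) * μ t with hFdef
  have hFc : Continuous F := aux_F_cont hμ hnn
  set K : Set ℝ := {y | b ≤ |y|} ∩ Icc (-(R+b)) (R+b) with hKdef
  have hKc : IsCompact K :=
    (isCompact_Icc).inter_left (isClosed_le continuous_const continuous_abs)
  have hKne : K.Nonempty := ⟨b, by
    constructor
    · simp [abs_of_pos hb]
    · constructor <;> [linarith; linarith]⟩
  obtain ⟨y₀, hy₀K, hy₀min⟩ := hKc.exists_isMinOn hKne hFc.continuousOn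
  have hy₀ne : y₀ ≠ 0 := by
    intro h
    have := hy₀K.1
    rw [h] at this
    simp only [abs_zero, mem_setOf_eq] at this
    linarith
  have hy₀pos : 0 < F y₀ := aux_F_pos hcm hcmcp hμ hnn hprob hy₀ne
  refine ⟨min (F y₀) (1/2), lt_min hy₀pos (by norm_num), fun y hy => ?_⟩
  by_cases hcase : |y| ≤ R + b
  · have hyK : y ∈ K := ⟨hy, abs_le.1 hcase⟩
    exact le_trans (min_le_left _ _) (hy₀min hyK)
  · have hyR : R ≤ |y| := by
      push_neg at hcase
      linarith
    have := hRle y hyR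
    rw [hFdef]
    simp only []
    rw [aux_split hcm hμ hprob y]
    calc min (F y₀) (1/2) ≤ 1/2 := min_le_right _ _
      _ ≤ 1 - ∫ t in Icc cm cp, Real.cos (y * Real.log t) * μ t := by linarith

lemma aux_A_cont (hcm : 0 < cm) (hcmcp : cm < cp) (hμ : Continuous μ)
    {α : ℝ} (hα0 : 0 < α) (hα1 : α < 1) :
    ContinuousAt (fun x : ℝ => ∫ t in Icc cm cp, t ^ x * μ t) α := by
  apply continuousAt_of_dominated (bound := fun t => max 1 (cp ^ (2:ℝ)) * |μ t|)
  · refine Eventually.of_forall (fun x => ?_)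
    exact ((measurable_id.pow_const x).mul hμ.measurable).aestronglyMeasurable
  · have hmem : Ioo (0:ℝ) 2 ∈ nhds α := Ioo_mem_nhds hα0 (by linarith)
    filter_upwards [hmem] with x hx
    filter_upwards [ae_restrict_mem measurableSet_Icc] with t ht
    have ht0 : 0 < t := lt_of_lt_of_le hcm ht.1
    rw [Real.norm_eq_abs, abs_mul, abs_of_nonneg (Real.rpow_nonneg ht0.le x)]
    apply mul_le_mul_of_nonneg_right _ (abs_nonneg _)
    by_cases h1 : t ≤ 1
    · calc t ^ x ≤ 1 := Real.rpow_le_one ht0.le h1 hx.1.le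
        _ ≤ max 1 (cp ^ (2:ℝ)) := le_max_left _ _
    · push_neg at h1
      calc t ^ x ≤ t ^ (2:ℝ) := Real.rpow_le_rpow_of_exponent_le h1.le hx.2.le
        _ ≤ cp ^ (2:ℝ) := Real.rpow_le_rpow ht0.le ht.2 (by norm_num)
        _ ≤ max 1 (cp ^ (2:ℝ)) := le_max_right _ _
  · exact (continuous_const.mul hμ.abs).integrableOn_Icc
  · filter_upwards [ae_restrict_mem measurableSet_Icc] with t ht
    have ht0 : 0 < t := lt_of_lt_of_le hcm ht.1
    have heq : (fun x : ℝ => t ^ x * μ t) = fun x => Real.exp (Real.log t * x) * μ t :=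
      funext fun x => by rw [Real.rpow_def_of_pos ht0]
    rw [heq]
    exact ((Real.continuous_exp.comp (continuous_const.mul continuous_id)).mul
      continuous_const).continuousAt

end

section
variable {cm cp : ℝ} {μ : ℝ → ℝ}

lemma aux_rpow_contOn (hcm : 0 < cm) (x : ℝ) :
    ContinuousOn (fun t : ℝ => t ^ x) (Icc cm cp) := fun t ht =>
  (Real.continuousAt_rpow_const t x (Or.inl (ne_of_gt (lt_of_lt_of_le hcm ht.1)))).continuousWithinAt

lemma aux_cos_contOn (hcm : 0 < cm) (hμ : Continuous μ) (y : ℝ) :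
    ContinuousOn (fun t => (1 - Real.cos (y * Real.log t)) * μ t) (Icc cm cp) := by
  apply ContinuousOn.mul _ hμ.continuousOn
  intro t ht
  exact (continuousAt_const.sub (Real.continuous_cos.continuousAt.comp
    (continuousAt_const.mul
      (Real.continuousAt_log (ne_of_gt (lt_of_lt_of_le hcm ht.1)))))).continuousWithinAt

end

theorem stmt16 (cm cp : ℝ) (hcm : 0 < cm) (hcmcp : cm < cp)
    (μ : ℝ → ℝ) (hμ : ContDiff ℝ 1 μ) (hsupp : Function.support μ ⊆ Set.Icc cm cp)
    (hnn : ∀ t, 0 ≤ μ t) (hprob : ∫ t in Set.Icc cm cp, μ t = 1)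
    (hmean : 1 < ∫ t in Set.Icc cm cp, t * μ t)
    (hlog : ∫ t in Set.Icc cm cp, Real.log t * μ t < 0)
    (α : ℝ) (hα : α ∈ Set.Ioo (0:ℝ) 1)
    (hroot : ∫ t in Set.Icc cm cp, (t : ℂ) ^ (α : ℂ) * (μ t : ℂ) = 1) :
    ∃ δ > 0, ∀ u : ℂ, u.re ∈ Set.Icc α (α + δ) →
      (∫ t in Set.Icc cm cp, (t : ℂ) ^ u * (μ t : ℂ)) = 1 → u = (α : ℂ) := by
  obtain ⟨hα0, hα1⟩ := hα
  have hμc : Continuous μ := hμ.continuous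
  set M : ℂ → ℂ := fun z => ∫ t in Set.Icc cm cp, (t:ℂ) ^ z * (μ t : ℂ) with hMdef
  have hMd : Differentiable ℂ M := aux_entire hcm hcmcp hμc hsupp
  have hAnal : AnalyticOnNhd ℂ M univ := hMd.differentiableOn.analyticOnNhd isOpen_univ
  have hAa : AnalyticAt ℂ M (α:ℂ) := hAnal _ (mem_univ _)
  rcases hAa.eventually_eq_or_eventually_ne analyticAt_const with hcase | hcase
  · exfalso
    have heq : EqOn M (fun _ => (1:ℂ)) univ :=
      hAnal.eqOn_of_preconnected_of_eventuallyEq analyticOnNhd_const isPreconnected_univ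
        (mem_univ (α:ℂ)) hcase
    have h1 : M ((1:ℝ):ℂ) = 1 := by
      rw [Complex.ofReal_one]; exact heq (mem_univ 1)
    simp only [hMdef] at h1
    rw [aux_real_val hcm 1] at h1
    have h3 : ∫ t in Set.Icc cm cp, t ^ (1:ℝ) * μ t = ∫ t in Set.Icc cm cp, t * μ t :=
      setIntegral_congr_fun measurableSet_Icc (fun t _ => by rw [Real.rpow_one])
    rw [h3] at h1
    rw [show (1:ℂ) = ((1:ℝ):ℂ) from (Complex.ofReal_one).symm] at h1
    have := Complex.ofReal_injective h1
    linarith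
  · -- extract r
    rw [eventually_nhdsWithin_iff] at hcase
    rw [Metric.eventually_nhds_iff] at hcase
    obtain ⟨r, hr, hrball⟩ := hcase
    obtain ⟨εF, hεF, hFlow⟩ := aux_unif hcm hcmcp hμc hnn hprob hsupp (b := r/2) (by linarith)
    set c₀ : ℝ := min 1 (cm ^ (2:ℝ)) with hc₀def
    have hc₀pos : 0 < c₀ := lt_min one_pos (Real.rpow_pos_of_pos hcm 2)
    have hAc := aux_A_cont (cp := cp) hcm hcmcp hμc hα0 hα1
    rw [Metric.continuousAt_iff] at hAc
    obtain ⟨δ₁, hδ₁, hAball⟩ := hAc (c₀ * εF) (by positivity)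
    set δ := min (δ₁/2) (min (r/4) (1/2)) with hδdef
    have hδpos : 0 < δ := lt_min (by linarith) (lt_min (by linarith) (by norm_num))
    refine ⟨δ, hδpos, fun u hu hMu => ?_⟩
    by_contra hne_u
    set x := u.re with hxdef
    set y := u.im with hydef
    have hx1 : α ≤ x := hu.1
    have hx2 : x ≤ α + δ := hu.2
    have hδle : δ ≤ 1/2 := le_trans (min_le_right _ _) (min_le_right _ _)
    have hδr : δ ≤ r/4 := le_trans (min_le_right _ _) (min_le_left _ _)
    have hδ₁' : δ ≤ δ₁/2 := min_le_left _ _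
    have hx0 : 0 ≤ x := by linarith
    have hxle2 : x ≤ 2 := by linarith
    -- A α = 1
    have hAα : ∫ t in Set.Icc cm cp, t ^ α * μ t = 1 := by
      have h := aux_real_val (cp := cp) (μ := μ) hcm α
      rw [hroot] at h
      rw [show (1:ℂ) = ((1:ℝ):ℂ) from (Complex.ofReal_one).symm] at h
      exact (Complex.ofReal_injective h.symm)
    -- Re M u = 1
    have hreMu : ∫ t in Set.Icc cm cp, t ^ x * (Real.cos (y * Real.log t) * μ t) = 1 := by
      have h := aux_re_integral (cp := cp) hcm hμc u
      rw [hMu, Complex.one_re] at h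
      exact h.symm
    -- integrabilities
    have hint1 : IntegrableOn (fun t => t ^ x * μ t) (Set.Icc cm cp) :=
      ((aux_rpow_contOn hcm x).mul hμc.continuousOn).integrableOn_compact isCompact_Icc
    have hint2 : IntegrableOn (fun t => t ^ x * (Real.cos (y * Real.log t) * μ t))
        (Set.Icc cm cp) := by
      apply ContinuousOn.integrableOn_compact isCompact_Icc
      apply (aux_rpow_contOn hcm x).mul
      apply ContinuousOn.mul _ hμc.continuousOn
      intro t ht
      exact (Real.continuous_cos.continuousAt.comp (continuousAt_const.mul
        (Real.continuousAt_log (ne_of_gt (lt_of_lt_of_le hcm ht.1))))).continuousWithinAt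
    have hint3 : IntegrableOn (fun t => t ^ x * ((1 - Real.cos (y * Real.log t)) * μ t))
        (Set.Icc cm cp) :=
      ((aux_rpow_contOn hcm x).mul (aux_cos_contOn hcm hμc y)).integrableOn_compact isCompact_Icc
    have hint4 : IntegrableOn (fun t => (1 - Real.cos (y * Real.log t)) * μ t)
        (Set.Icc cm cp) :=
      (aux_cos_contOn hcm hμc y).integrableOn_compact isCompact_Icc
    -- difference identity
    have hdiff : (∫ t in Set.Icc cm cp, t ^ x * μ t) - 1
        = ∫ t in Set.Icc cm cp, t ^ x * ((1 - Real.cos (y * Real.log t)) * μ t) := by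
      conv_lhs => rw [← hreMu]
      rw [← integral_sub hint1 hint2]
      exact setIntegral_congr_fun measurableSet_Icc (fun t _ => by ring)
    -- pointwise lower bound
    have hlow : c₀ * ∫ t in Set.Icc cm cp, (1 - Real.cos (y * Real.log t)) * μ t
        ≤ ∫ t in Set.Icc cm cp, t ^ x * ((1 - Real.cos (y * Real.log t)) * μ t) := by
      rw [← integral_const_mul]
      apply setIntegral_mono_on (hint4.const_mul c₀) hint3 measurableSet_Icc
      intro t ht
      have ht0 : 0 < t := lt_of_lt_of_le hcm ht.1
      have hfac : c₀ ≤ t ^ x := by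
        by_cases h1 : t ≤ 1
        · calc c₀ ≤ cm ^ (2:ℝ) := min_le_right _ _
            _ ≤ t ^ (2:ℝ) := Real.rpow_le_rpow hcm.le ht.1 (by norm_num)
            _ ≤ t ^ x := Real.rpow_le_rpow_of_exponent_ge ht0 h1 hxle2
        · push_neg at h1
          calc c₀ ≤ 1 := min_le_left _ _
            _ = t ^ (0:ℝ) := (Real.rpow_zero t).symm
            _ ≤ t ^ x := Real.rpow_le_rpow_of_exponent_le h1.le hx0
      have hnn2 : 0 ≤ (1 - Real.cos (y * Real.log t)) * μ t :=
        mul_nonneg (by nlinarith [Real.cos_le_one (y * Real.log t)]) (hnn t)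
      exact mul_le_mul_of_nonneg_right hfac hnn2
    -- closeness of A x to 1
    have hclose : |(∫ t in Set.Icc cm cp, t ^ x * μ t) - 1| < c₀ * εF := by
      have hd : dist x α < δ₁ := by
        rw [Real.dist_eq, abs_lt]
        constructor <;> linarith
      have h := hAball hd
      rw [Real.dist_eq, hAα] at h
      exact h
    by_cases hycase : r/2 ≤ |y|
    · have h1 := hFlow y hycase
      have h2 : c₀ * εF ≤ c₀ * ∫ t in Set.Icc cm cp, (1 - Real.cos (y * Real.log t)) * μ t :=
        mul_le_mul_of_nonneg_left h1 hc₀pos.le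
      have h3 := le_abs_self ((∫ t in Set.Icc cm cp, t ^ x * μ t) - 1)
      rw [hdiff] at h3
      rw [hdiff] at hclose
      linarith
    · push_neg at hycase
      have hdd : dist u ((α:ℝ):ℂ) < r := by
        rw [Complex.dist_eq]
        have hre : (u - ((α:ℝ):ℂ)).re = x - α := by simp [hxdef]
        have him : (u - ((α:ℝ):ℂ)).im = y := by simp [hydef]
        calc ‖u - ((α:ℝ):ℂ)‖
            ≤ |(u - ((α:ℝ):ℂ)).re| + |(u - ((α:ℝ):ℂ)).im| :=
              Complex.norm_le_abs_re_add_abs_im _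
          _ = |x - α| + |y| := by rw [hre, him]
          _ < r/4 + r/2 := by
              apply add_lt_add_of_le_of_lt _ hycase
              rw [abs_of_nonneg (by linarith)]
              linarith
          _ < r := by linarith
      exact hrball hdd (by simpa using hne_u) hMu
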